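/- Let n ≥ 2 and let F = x₀(x₀² + x₁² + ⋯ + xₙ²) ∈ ℂ[x₀,…,xₙ]. Then the degree-2 part F^⊥₂ of the apolar ideal of F has dim_ℂ F^⊥₂ = binom(n+1, 2), and the only common zero in ℂ^{n+1} of all quadrics in F^⊥₂ is the origin. -/

import Mathlib

open MvPolynomial

noncomputable def diffOpMonomial {m : ℕ} (α : Fin m →₀ ℕ) :
    MvPolynomial (Fin m) ℂ →ₗ[ℂ] MvPolynomial (Fin m) ℂ :=
  ((List.finRange m).map fun i =>
    ((pderiv (R := ℂ) i).toLinearMap) ^ (α i)).prod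

noncomputable def diffAct {m : ℕ} :
    MvPolynomial (Fin m) ℂ →ₗ[ℂ] (MvPolynomial (Fin m) ℂ →ₗ[ℂ] MvPolynomial (Fin m) ℂ) :=
  (MvPolynomial.basisMonomials (Fin m) ℂ).constr ℂ diffOpMonomial

noncomputable def DiffSpan {m : ℕ} (f : MvPolynomial (Fin m) ℂ) :
    Submodule ℂ (MvPolynomial (Fin m) ℂ) :=
  Submodule.span ℂ (Set.range fun α : Fin m →₀ ℕ => diffOpMonomial α f)

/-- The annihilator `f^⊥` of a polynomial `f`, as a `ℂ`-subspace of the ring of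
differential operators (it is in fact an ideal). -/
noncomputable def perp {m : ℕ} (f : MvPolynomial (Fin m) ℂ) :
    Submodule ℂ (MvPolynomial (Fin m) ℂ) :=
  LinearMap.ker (diffAct.flip f)

/-- An ideal `I` is apolar to `F` if `I ⊆ F^⊥`, i.e. every `D ∈ I` annihilates `F`. -/
def IsApolarTo {m : ℕ} (I : Ideal (MvPolynomial (Fin m) ℂ))
    (F : MvPolynomial (Fin m) ℂ) : Prop :=
  ∀ D ∈ I, diffAct D F = 0

/-- A homogeneous ideal is saturated (with respect to the irrelevant maximal ideal). -/
def IsSaturatedIdeal {m : ℕ} (I : Ideal (MvPolynomial (Fin m) ℂ)) : Prop :=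
  ∀ g : MvPolynomial (Fin m) ℂ, (∀ i : Fin m, X i * g ∈ I) → g ∈ I

/-- The Hilbert function of `T/I` in degree `e`: `dim_ℂ (T/I)_e = dim T_e − dim I_e`. -/
noncomputable def hilb {m : ℕ} (I : Ideal (MvPolynomial (Fin m) ℂ)) (e : ℕ) : ℕ :=
  Module.finrank ℂ (homogeneousSubmodule (Fin m) ℂ e) -
    Module.finrank ℂ
      (Submodule.restrictScalars ℂ I ⊓ homogeneousSubmodule (Fin m) ℂ e :
        Submodule ℂ (MvPolynomial (Fin m) ℂ))

/-- `I` defines a zero-dimensional subscheme of length `r`: it is homogeneous,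
saturated, and `dim_ℂ (T/I)_e = r` for all sufficiently large `e`. -/
def DefinesLength {m : ℕ} (I : Ideal (MvPolynomial (Fin m) ℂ)) (r : ℕ) : Prop :=
  (∀ g ∈ I, ∀ j : ℕ, homogeneousComponent j g ∈ I) ∧
  IsSaturatedIdeal I ∧
  ∃ e₀ : ℕ, ∀ e ≥ e₀, hilb I e = r

/-- The cactus rank of `F`: the minimal length of an apolar zero-dimensional subscheme. -/
noncomputable def cactusRank {m : ℕ} (F : MvPolynomial (Fin m) ℂ) : ℕ :=
  sInf {r : ℕ | ∃ I : Ideal (MvPolynomial (Fin m) ℂ), IsApolarTo I F ∧ DefinesLength I r}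

/-- Dehomogenization with respect to `x₀`: `f = F(1, x₁, …, xₙ)`. -/
noncomputable def dehom {n : ℕ} (F : MvPolynomial (Fin (n + 1)) ℂ) :
    MvPolynomial (Fin n) ℂ :=
  aeval (fun i : Fin (n + 1) =>
    Fin.cases (motive := fun _ => MvPolynomial (Fin n) ℂ) 1 (fun j => X j) i) F

/-- Homogenization with respect to a new variable `y₀`. -/
noncomputable def homogenize {n : ℕ} (g : MvPolynomial (Fin n) ℂ) :
    MvPolynomial (Fin (n + 1)) ℂ :=
  ∑ j ∈ Finset.range (g.totalDegree + 1),
    (X 0 : MvPolynomial (Fin (n + 1)) ℂ) ^ (g.totalDegree - j) *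
      rename Fin.succ (homogeneousComponent j g)

/-- `N_d`: `2·C(n+k,k)` if `d = 2k+1`, and `C(n+k,k) + C(n+k+1,k+1)` if `d = 2k+2`. -/
def Nd (n d : ℕ) : ℕ :=
  if d % 2 = 1 then 2 * Nat.choose (n + d / 2) (d / 2)
  else Nat.choose (n + d / 2 - 1) (d / 2 - 1) + Nat.choose (n + d / 2) (d / 2)



section Lemmas
variable {m : ℕ}

private lemma list_prod_eq_single' {M ι : Type*} [Monoid M] (f : ι → M) (i : ι)
    (l : List ι) (hnd : l.Nodup) (hmem : i ∈ l)
    (h : ∀ k, k ≠ i → f k = 1) : (l.map f).prod = f i := by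
  induction l with
  | nil => simp at hmem
  | cons a l ih =>
    rcases List.mem_cons.mp hmem with rfl | hmem'
    · have h1 : ∀ k ∈ l, f k = 1 := fun k hk =>
        h k (fun hki => (List.nodup_cons.mp hnd).1 (hki ▸ hk))
      rw [List.map_cons, List.prod_cons, List.prod_eq_one (by
        intro x hx
        obtain ⟨k, hk, rfl⟩ := List.mem_map.mp hx
        exact h1 k hk), mul_one]
    · rw [List.map_cons, List.prod_cons, h a (fun hai => by
        exact (List.nodup_cons.mp hnd).1 (hai ▸ hmem')), one_mul]
      exact ih (List.nodup_cons.mp hnd).2 hmem'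

private lemma list_prod_map_mul {M ι : Type*} [Monoid M] (l : List ι) (f g : ι → M)
    (hc : ∀ a b, Commute (g a) (f b)) :
    (l.map fun i => f i * g i).prod = (l.map f).prod * (l.map g).prod := by
  induction l with
  | nil => simp
  | cons a l ih =>
    simp only [List.map_cons, List.prod_cons, ih]
    have hcm : Commute (g a) ((l.map f).prod) := Commute.list_prod_right _ _ (by
      intro x hx
      obtain ⟨b, _, rfl⟩ := List.mem_map.mp hx
      exact hc a b)
    rw [mul_assoc, mul_assoc, ← mul_assoc (g a), hcm.eq, mul_assoc]

lemma pderiv_pderiv_comm (i j : Fin m) (f : MvPolynomial (Fin m) ℂ) :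
    pderiv i (pderiv j f) = pderiv j (pderiv i f) := by
  induction f using MvPolynomial.induction_on' with
  | add p q hp hq => simp [hp, hq]
  | monomial s a =>
    rcases eq_or_ne i j with rfl | hij
    · rfl
    · simp only [pderiv_monomial]
      rw [tsub_tsub, tsub_tsub, add_comm (Finsupp.single j 1)]
      congr 1
      have h1 : (s - Finsupp.single j 1 : Fin m →₀ ℕ) i = s i := by
        rw [Finsupp.tsub_apply, Finsupp.single_apply, if_neg (Ne.symm hij)]; rfl
      have h2 : (s - Finsupp.single i 1 : Fin m →₀ ℕ) j = s j := by
        rw [Finsupp.tsub_apply, Finsupp.single_apply, if_neg hij]; rfl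
      rw [h1, h2]; ring

lemma pderiv_commute (i j : Fin m) :
    Commute ((pderiv (R := ℂ) i).toLinearMap : MvPolynomial (Fin m) ℂ →ₗ[ℂ] _)
      ((pderiv (R := ℂ) j).toLinearMap) := by
  apply LinearMap.ext
  intro f
  simp [Module.End.mul_apply, pderiv_pderiv_comm]

lemma diffOpMonomial_add (α β : Fin m →₀ ℕ) :
    diffOpMonomial (α + β) = diffOpMonomial α * diffOpMonomial β := by
  unfold diffOpMonomial
  rw [← list_prod_map_mul _ _ _ (fun a b => ((pderiv_commute a b).pow_pow _ _))]
  congr 1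
  apply List.map_congr_left
  intro i _
  rw [Finsupp.add_apply, pow_add]

lemma diffOpMonomial_single (i : Fin m) :
    diffOpMonomial (Finsupp.single i 1) = (pderiv (R := ℂ) i).toLinearMap := by
  unfold diffOpMonomial
  rw [list_prod_eq_single' _ i _ (List.nodup_finRange m) (List.mem_finRange i)
    (fun k hk => by simp [Finsupp.single_apply, (Ne.symm hk)])]
  simp

lemma diffOpMonomial_pair (i j : Fin m) (f : MvPolynomial (Fin m) ℂ) :
    diffOpMonomial (Finsupp.single i 1 + Finsupp.single j 1) f = pderiv i (pderiv j f) := by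
  rw [diffOpMonomial_add, diffOpMonomial_single, diffOpMonomial_single]
  rfl

end Lemmas

section Act
variable {m : ℕ}

lemma diffAct_monomial (α : Fin m →₀ ℕ) (c : ℂ) :
    diffAct (monomial α c) = c • diffOpMonomial α := by
  have h : (monomial α c : MvPolynomial (Fin m) ℂ) = c • (basisMonomials (Fin m) ℂ α) := by
    rw [coe_basisMonomials]
    rw [MvPolynomial.smul_monomial, smul_eq_mul, mul_one]
  rw [diffAct, h, map_smul, Module.Basis.constr_basis]

lemma diffAct_apply (D F : MvPolynomial (Fin m) ℂ) :
    diffAct D F = ∑ α ∈ D.support, MvPolynomial.coeff α D • diffOpMonomial α F := by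
  conv_lhs => rw [D.as_sum]
  rw [map_sum, LinearMap.coe_sum]
  simp only [Finset.sum_apply]
  congr 1
  ext α
  rw [diffAct_monomial]
  rfl

lemma hS (j : Fin m) : pderiv j (∑ k, X k ^ 2 : MvPolynomial (Fin m) ℂ) = 2 * X j := by
  rw [map_sum, Finset.sum_eq_single j]
  · simp [pderiv_pow, pderiv_X_self]
  · intro k _ hk
    simp [pderiv_pow, pderiv_X_of_ne hk]
  · simp

lemma hXX [NeZero m] (i j : Fin m) :
    pderiv i (X 0 * (2 * X j) : MvPolynomial (Fin m) ℂ) =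
      (if i = 0 then 2 • X j else 0) + (if i = j then 2 • X 0 else 0) := by
  have h2 : (2 : MvPolynomial (Fin m) ℂ) = C (2 : ℂ) := (map_ofNat C 2).symm
  rw [pderiv_mul, h2, pderiv_C_mul]
  rcases eq_or_ne i 0 with rfl | hi
  · rw [pderiv_X_self, one_mul, if_pos rfl]
    rcases eq_or_ne j 0 with rfl | hj
    · rw [pderiv_X_self, if_pos rfl]
      rw [← h2, two_smul]; ring
    · rw [pderiv_X_of_ne hj, if_neg (Ne.symm hj)]
      rw [← h2, two_smul]; ring
  · rw [pderiv_X_of_ne (Ne.symm hi), zero_mul, zero_add, if_neg hi, zero_add]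
    rcases eq_or_ne i j with rfl | hij
    · rw [pderiv_X_self, if_pos rfl]
      rw [← h2, two_smul]; ring
    · rw [pderiv_X_of_ne (Ne.symm hij), if_neg hij]
      ring

lemma pderiv2_F [NeZero m] (i j : Fin m) :
    pderiv i (pderiv j (X 0 * ∑ k, X k ^ 2 : MvPolynomial (Fin m) ℂ)) =
      (if j = 0 then 2 • X i else 0) + (if i = 0 then 2 • X j else 0) +
        (if i = j then 2 • X 0 else 0) := by
  rw [pderiv_mul, hS, map_add, hXX]
  rcases eq_or_ne j 0 with rfl | hj
  · rw [pderiv_X_self, one_mul, hS, if_pos rfl, two_smul, two_mul]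
    abel
  · rw [pderiv_X_of_ne (Ne.symm hj), zero_mul, map_zero, if_neg hj, zero_add, zero_add]

end Act

section Class
variable {m : ℕ}

lemma degree_two_classify {α : Fin m →₀ ℕ} (h : Finsupp.degree α = 2) :
    ∃ i j, α = Finsupp.single i 1 + Finsupp.single j 1 := by
  have hc : Multiset.card (Finsupp.toMultiset α) = 2 := by
    rw [Finsupp.card_toMultiset]
    simpa [Finsupp.degree_apply, Finsupp.sum] using h
  obtain ⟨i, j, hij⟩ := Multiset.card_eq_two.mp hc
  refine ⟨i, j, ?_⟩
  have h2 : Finsupp.toMultiset (Finsupp.single i 1 + Finsupp.single j 1) = {i, j} := by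
    rw [map_add, Finsupp.toMultiset_single, Finsupp.toMultiset_single]
    simp [Multiset.insert_eq_cons]
  have h3 := hij.trans h2.symm
  have : Multiset.toFinsupp (Finsupp.toMultiset α)
      = Multiset.toFinsupp (Finsupp.toMultiset (Finsupp.single i 1 + Finsupp.single j 1)) := by
    rw [h3]
  rw [Finsupp.toMultiset_toFinsupp, Finsupp.toMultiset_toFinsupp] at this
  exact this

lemma X_mul_X (i j : Fin m) :
    (X i * X j : MvPolynomial (Fin m) ℂ)
      = monomial (Finsupp.single i 1 + Finsupp.single j 1) 1 := by
  rw [X, X, monomial_mul, one_mul]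

lemma XX_mem_homog2 (i j : Fin m) :
    (X i * X j : MvPolynomial (Fin m) ℂ) ∈ homogeneousSubmodule (Fin m) ℂ 2 := by
  rw [mem_homogeneousSubmodule]
  exact (isHomogeneous_X ℂ i).mul (isHomogeneous_X ℂ j)

lemma diffAct_XX [NeZero m] (i j : Fin m) :
    diffAct (X i * X j) (X 0 * ∑ k, X k ^ 2 : MvPolynomial (Fin m) ℂ) =
      (if j = 0 then 2 • X i else 0) + (if i = 0 then 2 • X j else 0) +
        (if i = j then 2 • X 0 else 0) := by
  rw [X_mul_X, diffAct_monomial, one_smul, diffOpMonomial_pair, pderiv2_F]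

end Class

section Part2
variable {n : ℕ}

local notation "Fq" => (X 0 * ∑ k, X k ^ 2 : MvPolynomial (Fin (n + 1)) ℂ)

lemma part2 (hn : 2 ≤ n) (p : Fin (n + 1) → ℂ)
    (hp : ∀ D : MvPolynomial (Fin (n + 1)) ℂ, D ∈ homogeneousSubmodule (Fin (n + 1)) ℂ 2 →
      diffAct D Fq = 0 → eval p D = 0) : p = 0 := by
  -- products of distinct nonzero-variable pairs annihilate F
  have hprod : ∀ i j : Fin (n + 1), i ≠ 0 → j ≠ 0 → i ≠ j → p i * p j = 0 := by
    intro i j hi hj hij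
    have h0 : diffAct (X i * X j) Fq = 0 := by
      rw [diffAct_XX, if_neg hj, if_neg hi, if_neg hij]
      simp
    have := hp _ (XX_mem_homog2 i j) h0
    simpa using this
  have hsq : ∀ i j : Fin (n + 1), i ≠ 0 → j ≠ 0 → p i * p i = p j * p j := by
    intro i j hi hj
    have h0 : diffAct (X i * X i - X j * X j) Fq = 0 := by
      rw [map_sub, LinearMap.sub_apply, diffAct_XX, diffAct_XX]
      simp [hi, hj]
    have := hp _ (sub_mem (XX_mem_homog2 i i) (XX_mem_homog2 j j)) h0
    simp only [map_sub, map_mul, eval_X] at this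
    exact sub_eq_zero.mp this
  have hq3 : ∀ j : Fin (n + 1), j ≠ 0 → p 0 * p 0 = 3 * (p j * p j) := by
    intro j hj
    have h0 : diffAct (X 0 * X 0 - (3 : ℂ) • (X j * X j)) Fq = 0 := by
      rw [map_sub, map_smul, LinearMap.sub_apply, LinearMap.smul_apply, diffAct_XX, diffAct_XX]
      simp only [if_pos rfl, if_neg hj, zero_add, add_zero]
      module
    have := hp _ (sub_mem (XX_mem_homog2 0 0)
      (Submodule.smul_mem _ _ (XX_mem_homog2 j j))) h0
    simp only [map_sub, map_mul, eval_X, smul_eq_C_mul, eval_C] at this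
    have h2 := sub_eq_zero.mp this
    linear_combination h2
  have hz : ∀ i : Fin (n + 1), i ≠ 0 → p i = 0 := by
    intro i hi
    set i1 : Fin (n + 1) := ⟨1, by omega⟩ with hi1
    set i2 : Fin (n + 1) := ⟨2, by omega⟩ with hi2
    have h10 : i1 ≠ 0 := by simp [hi1, Fin.ext_iff]
    have h20 : i2 ≠ 0 := by simp [hi2, Fin.ext_iff]
    have h12 : i1 ≠ i2 := by simp [hi1, hi2, Fin.ext_iff]
    obtain ⟨j, hj0, hij⟩ : ∃ j : Fin (n + 1), j ≠ 0 ∧ i ≠ j := by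
      rcases eq_or_ne i i1 with rfl | hii1
      · exact ⟨i2, h20, h12⟩
      · exact ⟨i1, h10, hii1⟩
    have h1 := hprod i j hi hj0 hij
    have h2 := hsq i j hi hj0
    have h4 : (p i * p i) * (p i * p i) = 0 := by
      linear_combination (p i * p i) * h2 + (p i * p j) * h1
    exact mul_self_eq_zero.mp (mul_self_eq_zero.mp h4)
  funext i
  show p i = 0
  rcases eq_or_ne i 0 with rfl | hi
  · have h1 : p (⟨1, by omega⟩ : Fin (n + 1)) = 0 := hz _ (by simp [Fin.ext_iff])
    have := hq3 ⟨1, by omega⟩ (by simp [Fin.ext_iff])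
    rw [h1] at this
    simpa [mul_self_eq_zero] using this
  · exact hz i hi

end Part2

section Dim
variable {m : ℕ}

lemma degree_eq_card_toMultiset (d : Fin m →₀ ℕ) :
    Finsupp.degree d = Multiset.card (Finsupp.toMultiset d) := by
  rw [Finsupp.card_toMultiset]
  rfl

/-- Equivalence between degree-2 exponents and `Sym (Fin m) 2`. -/
noncomputable def degTwoEquiv :
    {d : Fin m →₀ ℕ // Finsupp.degree d = 2} ≃ Sym (Fin m) 2 where
  toFun d := ⟨Finsupp.toMultiset d.1, by rw [← degree_eq_card_toMultiset]; exact d.2⟩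
  invFun s := ⟨Multiset.toFinsupp s.1, by
    rw [degree_eq_card_toMultiset, Multiset.toFinsupp_toMultiset]
    exact s.2⟩
  left_inv d := by
    ext1
    exact Finsupp.toMultiset_toFinsupp d.1
  right_inv s := by
    ext1
    exact Multiset.toFinsupp_toMultiset s.1

noncomputable instance : Fintype {d : Fin m →₀ ℕ // Finsupp.degree d = 2} :=
  Fintype.ofEquiv _ degTwoEquiv.symm

lemma card_degTwo : Fintype.card {d : Fin m →₀ ℕ // Finsupp.degree d = 2}
    = (m + 1).choose 2 := by
  rw [Fintype.card_congr degTwoEquiv, Sym.card_sym_eq_choose, Fintype.card_fin]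
  congr 1

/-- The homogeneous part of degree 2 as a finsupp space. -/
noncomputable def homogTwoEquiv :
    (homogeneousSubmodule (Fin m) ℂ 2 : Submodule ℂ (MvPolynomial (Fin m) ℂ))
      ≃ₗ[ℂ] ({d : Fin m →₀ ℕ // Finsupp.degree d = 2} →₀ ℂ) :=
  (LinearEquiv.ofEq _ _ (homogeneousSubmodule_eq_finsupp_supported (Fin m) ℂ 2)).trans
    (AddMonoidAlgebra.supportedEquivFinsupp _)

instance : FiniteDimensional ℂ
    (homogeneousSubmodule (Fin m) ℂ 2 : Submodule ℂ (MvPolynomial (Fin m) ℂ)) :=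
  Module.Finite.equiv homogTwoEquiv.symm

lemma finrank_homogTwo :
    Module.finrank ℂ
      (homogeneousSubmodule (Fin m) ℂ 2 : Submodule ℂ (MvPolynomial (Fin m) ℂ))
      = (m + 1).choose 2 := by
  rw [homogTwoEquiv.finrank_eq, Module.finrank_finsupp_self, card_degTwo]

end Dim

section Range
variable {m : ℕ} [NeZero m]

local notation "Fq" => (X 0 * ∑ k, X k ^ 2 : MvPolynomial (Fin m) ℂ)
local notation "B2" => (homogeneousSubmodule (Fin m) ℂ 2 : Submodule ℂ (MvPolynomial (Fin m) ℂ))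

noncomputable def Lmap : (B2 : Type _) →ₗ[ℂ] MvPolynomial (Fin m) ℂ :=
  (diffAct.flip Fq) ∘ₗ (homogeneousSubmodule (Fin m) ℂ 2).subtype

lemma X_linearIndependent :
    LinearIndependent ℂ (fun k : Fin m => (X k : MvPolynomial (Fin m) ℂ)) := by
  have h : (fun k : Fin m => (X k : MvPolynomial (Fin m) ℂ))
      = (basisMonomials (Fin m) ℂ) ∘ (fun k => Finsupp.single k 1) := by
    funext k
    rw [Function.comp_apply, coe_basisMonomials]
    rfl
  rw [h]
  exact (basisMonomials (Fin m) ℂ).linearIndependent.comp _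
    (Finsupp.single_left_injective one_ne_zero)

lemma range_Lmap :
    LinearMap.range (Lmap (m := m))
      = Submodule.span ℂ (Set.range fun k : Fin m => (X k : MvPolynomial (Fin m) ℂ)) := by
  apply le_antisymm
  · rintro x ⟨v, rfl⟩
    show diffAct (v : MvPolynomial (Fin m) ℂ) Fq ∈ _
    rw [diffAct_apply]
    apply Submodule.sum_mem
    intro α hα
    apply Submodule.smul_mem
    have hdeg : Finsupp.degree α = 2 := by
      rw [Finsupp.degree_eq_weight_one]
      exact v.2 (MvPolynomial.mem_support_iff.mp hα)
    obtain ⟨i, j, rfl⟩ := degree_two_classify hdeg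
    rw [diffOpMonomial_pair, pderiv2_F]
    apply add_mem (add_mem ?_ ?_) ?_ <;> split_ifs <;>
      first
        | exact zero_mem _
        | exact nsmul_mem (Submodule.subset_span (Set.mem_range_self _)) 2
  · rw [Submodule.span_le]
    intro x hx
    obtain ⟨k, rfl⟩ := hx
    rw [SetLike.mem_coe, LinearMap.mem_range]
    rcases eq_or_ne k 0 with rfl | hk
    · refine ⟨(6 : ℂ)⁻¹ • (⟨X 0 * X 0, XX_mem_homog2 0 0⟩ : B2), ?_⟩
      rw [map_smul]
      have h1 : Lmap (⟨X 0 * X 0, XX_mem_homog2 0 0⟩ : B2) = diffAct (X 0 * X 0) Fq := rfl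
      rw [h1, diffAct_XX]
      show (6 : ℂ)⁻¹ • (2 • (X 0 : MvPolynomial (Fin m) ℂ) + 2 • X 0 + 2 • X 0) = X 0
      module
    · refine ⟨(2 : ℂ)⁻¹ • (⟨X 0 * X k, XX_mem_homog2 0 k⟩ : B2), ?_⟩
      rw [map_smul]
      have h1 : Lmap (⟨X 0 * X k, XX_mem_homog2 0 k⟩ : B2) = diffAct (X 0 * X k) Fq := rfl
      rw [h1, diffAct_XX, if_neg hk, if_neg (Ne.symm hk)]
      show (2 : ℂ)⁻¹ • ((0 : MvPolynomial (Fin m) ℂ) + 2 • X k + 0) = X k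
      module

lemma finrank_range_Lmap :
    Module.finrank ℂ (LinearMap.range (Lmap (m := m))) = m := by
  rw [range_Lmap, finrank_span_eq_card X_linearIndependent, Fintype.card_fin]

end Range

section Ker
variable {m : ℕ} [NeZero m]

local notation "Fq" => (X 0 * ∑ k, X k ^ 2 : MvPolynomial (Fin m) ℂ)
local notation "B2" => (homogeneousSubmodule (Fin m) ℂ 2 : Submodule ℂ (MvPolynomial (Fin m) ℂ))

lemma ker_Lmap_eq :
    LinearMap.ker (Lmap (m := m))
      = Submodule.comap (homogeneousSubmodule (Fin m) ℂ 2).subtype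
          (LinearMap.ker ((diffAct (m := m)).flip Fq) ⊓ homogeneousSubmodule (Fin m) ℂ 2) := by
  rw [Submodule.comap_inf, Submodule.comap_subtype_self, inf_top_eq]
  exact LinearMap.ker_comp _ _

lemma finrank_perp_two :
    Module.finrank ℂ
      (LinearMap.ker ((diffAct (m := m)).flip Fq) ⊓ homogeneousSubmodule (Fin m) ℂ 2 :
        Submodule ℂ (MvPolynomial (Fin m) ℂ)) = (m + 1).choose 2 - m := by
  have h1 := LinearMap.finrank_range_add_finrank_ker (Lmap (m := m))
  rw [finrank_range_Lmap, finrank_homogTwo] at h1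
  have h2 : Module.finrank ℂ (LinearMap.ker (Lmap (m := m)))
      = Module.finrank ℂ
        (LinearMap.ker ((diffAct (m := m)).flip Fq) ⊓ homogeneousSubmodule (Fin m) ℂ 2 :
          Submodule ℂ (MvPolynomial (Fin m) ℂ)) := by
    rw [ker_Lmap_eq]
    exact (Submodule.comapSubtypeEquivOfLe inf_le_right).finrank_eq
  omega

end Ker


/-- For `n ≥ 2` and `F = x₀(x₀² + ⋯ + xₙ²)`, the degree-2 part of
`F^⊥` has dimension `C(n+1,2)` and its quadrics have only the origin as common zero. -/
theorem statement11 {n : ℕ} (hn : 2 ≤ n)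
    (F : MvPolynomial (Fin (n + 1)) ℂ)
    (hF : F = X 0 * ∑ i : Fin (n + 1), X i ^ 2) :
    Module.finrank ℂ
      (LinearMap.ker ((diffAct (m := n + 1)).flip F) ⊓
        homogeneousSubmodule (Fin (n + 1)) ℂ 2 :
        Submodule ℂ (MvPolynomial (Fin (n + 1)) ℂ)) = Nat.choose (n + 1) 2 ∧
    ∀ p : Fin (n + 1) → ℂ,
      (∀ D : MvPolynomial (Fin (n + 1)) ℂ, D ∈ homogeneousSubmodule (Fin (n + 1)) ℂ 2 →
        diffAct D F = 0 → eval p D = 0) → p = 0 := by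
  subst hF
  constructor
  · rw [finrank_perp_two]
    have h : (n + 1 + 1).choose 2 = (n + 1).choose 1 + (n + 1).choose 2 :=
      Nat.choose_succ_succ (n + 1) 1
    rw [Nat.choose_one_right] at h
    omega
  · intro p hp
    exact part2 hn p hp
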